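/- Let F ∈ S^m(ℝ[x]) be a symmetric univariate polynomial matrix. Then F(x) is positive semidefinite for all x ∈ ℝ if and only if there exist a nonzero polynomial b ∈ ℝ[x] and polynomial matrices U, V ∈ ℝ[x]^{m×m} such that b²·F = UᵀU + VᵀV. -/

import Mathlib

open Matrix Polynomial

section Aux

lemma nonneg_of_nonneg_off_zeros (q s : Polynomial ℝ) (hs : s ≠ 0)
    (h : ∀ x, s.eval x ≠ 0 → 0 ≤ q.eval x) : ∀ x, 0 ≤ q.eval x := by
  have hfin : {x : ℝ | s.IsRoot x}.Finite := s.finite_setOf_isRoot hs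
  have hd : Dense {x : ℝ | s.IsRoot x}ᶜ := hfin.countable.dense_compl ℝ
  have hcl : IsClosed {x : ℝ | 0 ≤ q.eval x} :=
    isClosed_le continuous_const (q.continuous)
  intro x
  have hsub : {x : ℝ | s.IsRoot x}ᶜ ⊆ {x : ℝ | 0 ≤ q.eval x} := fun y hy => h y hy
  have : closure {x : ℝ | s.IsRoot x}ᶜ ⊆ {x : ℝ | 0 ≤ q.eval x} :=
    hcl.closure_subset_iff.mpr hsub
  exact this (hd x)

lemma sos_of_nonneg_aux : ∀ (n : ℕ) (p : Polynomial ℝ), p.natDegree = n → (∀ x, 0 ≤ p.eval x) →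
    ∃ a b : Polynomial ℝ, p = a ^ 2 + b ^ 2 := by
  intro n
  induction n using Nat.strong_induction_on with
  | _ n ih =>
  intro p hn hp
  rcases Nat.eq_zero_or_pos n with h0 | hpos
  · subst h0
    have := Polynomial.eq_C_of_natDegree_eq_zero hn
    refine ⟨C (Real.sqrt (p.coeff 0)), 0, ?_⟩
    have hc : 0 ≤ p.coeff 0 := (coeff_zero_eq_eval_zero p) ▸ hp 0
    rw [this]
    simp [← C_pow, Real.sq_sqrt hc]
  · have hp0 : p ≠ 0 := fun h => by simp [h] at hn; omega
    have hdeg : 0 < p.degree := natDegree_pos_iff_degree_pos.mp (hn ▸ hpos)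
    obtain ⟨z, hz⟩ : ∃ z : ℂ, aeval z p = 0 := by
      obtain ⟨z, hz⟩ := Complex.exists_root (f := p.map (algebraMap ℝ ℂ))
        (by rwa [degree_map_eq_of_injective (algebraMap ℝ ℂ).injective])
      exact ⟨z, by rwa [aeval_def, ← eval_map]⟩
    rcases eq_or_ne z.im 0 with him | him
    · -- real root case
      set r := z.re with hr
      have hroot : p.IsRoot r := by
        have hzr : z = (r : ℂ) := Complex.ext rfl him
        rw [hzr] at hz
        have h2 : (algebraMap ℝ ℂ) (p.eval r) = 0 := by
          rw [show ((r : ℝ) : ℂ) = algebraMap ℝ ℂ r from rfl] at hz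
          rwa [aeval_def, eval₂_at_apply] at hz
        exact (map_eq_zero_iff _ (algebraMap ℝ ℂ).injective).mp h2
      obtain ⟨q₁, hq₁⟩ := (dvd_iff_isRoot.mpr hroot)
      have hq₁r : q₁.eval r = 0 := by
        have hcont : ContinuousAt (fun t => q₁.eval t) r := (q₁.continuous).continuousAt
        have hge : 0 ≤ q₁.eval r := by
          refine ge_of_tendsto (hcont.tendsto.mono_left (nhdsWithin_le_nhds (s := Set.Ioi r)))
            (eventually_nhdsWithin_of_forall ?_)
          intro t ht
          have h1 : 0 ≤ (t - r) * q₁.eval t := by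
            have := hp t; rw [hq₁] at this; simpa using this
          have htr : (0:ℝ) < t - r := by simpa using (Set.mem_Ioi.mp ht)
          exact (mul_nonneg_iff_of_pos_left htr).mp h1
        have hle : q₁.eval r ≤ 0 := by
          refine le_of_tendsto (hcont.tendsto.mono_left (nhdsWithin_le_nhds (s := Set.Iio r)))
            (eventually_nhdsWithin_of_forall ?_)
          intro t ht
          have h1 : 0 ≤ (t - r) * q₁.eval t := by
            have := hp t; rw [hq₁] at this; simpa using this
          nlinarith [Set.mem_Iio.mp ht]
        linarith
      obtain ⟨q, hq⟩ := (dvd_iff_isRoot.mpr hq₁r)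
      have hpq : p = (X - C r) ^ 2 * q := by rw [hq₁, hq]; ring
      have hqne : q ≠ 0 := fun h => hp0 (by rw [hpq, h, mul_zero])
      have hdq : q.natDegree < n := by
        have : p.natDegree = 2 + q.natDegree := by
          rw [hpq, natDegree_mul (pow_ne_zero 2 (X_sub_C_ne_zero r)) hqne, natDegree_pow, natDegree_X_sub_C]
        omega
      have hqnn : ∀ x, 0 ≤ q.eval x := by
        apply nonneg_of_nonneg_off_zeros q (X - C r) (X_sub_C_ne_zero r)
        intro x hx
        have hx' : x - r ≠ 0 := by simpa using hx
        have h1 : 0 ≤ (x - r) ^ 2 * q.eval x := by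
          have := hp x; rw [hpq] at this; simpa using this
        exact (mul_nonneg_iff_of_pos_left (by positivity)).mp h1
      obtain ⟨a, b, hab⟩ := ih q.natDegree hdq q rfl hqnn
      exact ⟨(X - C r) * a, (X - C r) * b, by rw [hpq, hab]; ring⟩
    · -- complex root case
      set g : Polynomial ℝ := X ^ 2 - C (2 * z.re) * X + C (‖z‖ ^ 2) with hg
      obtain ⟨q, hq⟩ := p.quadratic_dvd_of_aeval_eq_zero_im_ne_zero hz him
      rw [← hg] at hq
      have hgval : ∀ x : ℝ, g.eval x = (x - z.re) ^ 2 + z.im ^ 2 := by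
        intro x
        simp only [hg, eval_add, eval_sub, eval_pow, eval_mul, eval_X, eval_C, Complex.sq_norm]
        rw [Complex.normSq_apply]
        ring
      have hgpos : ∀ x : ℝ, 0 < g.eval x := by
        intro x; rw [hgval]; positivity
      have hqne : q ≠ 0 := fun h => hp0 (by rw [hq, h, mul_zero])
      have hgdeg : g.natDegree = 2 := by
        rw [hg]; compute_degree!
      have hgne : g ≠ 0 := fun h => by rw [h] at hgdeg; simp at hgdeg
      have hdq : q.natDegree < n := by
        have : p.natDegree = g.natDegree + q.natDegree := by rw [hq, natDegree_mul hgne hqne]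
        omega
      have hqnn : ∀ x, 0 ≤ q.eval x := by
        intro x
        have h1 : 0 ≤ g.eval x * q.eval x := by have := hp x; rw [hq] at this; simpa using this
        exact (mul_nonneg_iff_of_pos_left (hgpos x)).mp h1
      obtain ⟨a, b, hab⟩ := ih q.natDegree hdq q rfl hqnn
      have hgsos : g = (X - C z.re) ^ 2 + C z.im ^ 2 := by
        have hnrm : ‖z‖ ^ 2 = z.re ^ 2 + z.im ^ 2 := by
          rw [Complex.sq_norm, Complex.normSq_apply]; ring
        rw [hg, hnrm]; simp only [C_add, C_mul, C_pow, map_ofNat]; ring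
      refine ⟨(X - C z.re) * a - C z.im * b, (X - C z.re) * b + C z.im * a, ?_⟩
      rw [hq, hgsos, hab]; ring

/-- evaluation of a quadratic-form expression -/
lemma eval_quadform {m : ℕ} (M : Matrix (Fin m) (Fin m) (Polynomial ℝ)) (u : Fin m → ℝ)
    (x : ℝ) :
    Polynomial.eval x ((fun i => C (u i)) ⬝ᵥ M.mulVec (fun i => C (u i))) =
      u ⬝ᵥ (M.map (fun p => p.eval x)).mulVec u := by
  simp [dotProduct, Matrix.mulVec, eval_finset_sum, Matrix.map_apply, mul_comm]

lemma dot_self_nonneg {m : ℕ} (w : Fin m → ℝ) : 0 ≤ w ⬝ᵥ w :=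
  Finset.sum_nonneg fun i _ => mul_self_nonneg _

end Aux

set_option maxHeartbeats 2000000 in
set_option synthInstance.maxHeartbeats 200000 in
theorem psd_on_R_iff_two_sohs (m : ℕ)
    (F : Matrix (Fin m) (Fin m) (Polynomial ℝ)) (hsym : Fᵀ = F) :
    (∀ x : ℝ, ∀ u : Fin m → ℝ,
        0 ≤ u ⬝ᵥ (F.map (fun p => p.eval x)).mulVec u) ↔
    (∃ b : Polynomial ℝ, b ≠ 0 ∧
      ∃ U V : Matrix (Fin m) (Fin m) (Polynomial ℝ),
        b ^ 2 • F = Uᵀ * U + Vᵀ * V) := by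
  classical
  set φ : Polynomial ℝ →+* RatFunc ℝ := algebraMap (Polynomial ℝ) (RatFunc ℝ) with hφdef
  have hφ : Function.Injective φ := IsFractionRing.injective _ _
  constructor
  · intro hF
    -- setup over the fraction field
    set A : Matrix (Fin m) (Fin m) (RatFunc ℝ) := F.map φ with hAdef
    have hAs : Aᵀ = A := by rw [hAdef, ← Matrix.transpose_map, hsym]
    haveI hinv2 : Invertible (2 : RatFunc ℝ) := by
      refine invertibleOfNonzero (fun h => ?_)
      have h2 : φ (2 : Polynomial ℝ) = 0 := by rw [map_ofNat]; exact h
      have := hφ (h2.trans (map_zero φ).symm)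
      norm_num at this
    set B : LinearMap.BilinForm (RatFunc ℝ) (Fin m → RatFunc ℝ) := Matrix.toLinearMap₂' (RatFunc ℝ) A with hBdef
    have hBapp : ∀ xx yy, B xx yy = xx ⬝ᵥ A.mulVec yy := fun xx yy =>
      Matrix.toLinearMap₂'_apply' A xx yy
    have hBsymm : LinearMap.IsSymm B := by
      rw [LinearMap.isSymm_def]
      intro xx yy
      simp only [RingHom.id_apply, hBapp]
      rw [Matrix.dotProduct_mulVec, ← Matrix.transpose_transpose A,
        Matrix.vecMul_transpose, Matrix.transpose_transpose, hAs, dotProduct_comm]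
    obtain ⟨v0, hv0⟩ := LinearMap.BilinForm.exists_orthogonal_basis hBsymm
    have hfr : Module.finrank (RatFunc ℝ) (Fin m → RatFunc ℝ) = m := Module.finrank_fin_fun _
    set vb : Module.Basis (Fin m) (RatFunc ℝ) (Fin m → RatFunc ℝ) := v0.reindex (finCongr hfr) with hvb
    have hvbortho : ∀ i j, i ≠ j → B (vb i) (vb j) = 0 := by
      intro i j hij
      rw [hvb, Module.Basis.reindex_apply, Module.Basis.reindex_apply]
      refine (LinearMap.isOrthoᵢ_def.mp hv0) _ _ (fun h => hij ?_)
      simpa using congrArg (finCongr hfr) h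
    set P : Matrix (Fin m) (Fin m) (RatFunc ℝ) := Matrix.of (fun i j => vb j i) with hPdef
    have hPtm : (Pi.basisFun (RatFunc ℝ) (Fin m)).toMatrix vb = P := by
      ext i j
      rw [Module.Basis.toMatrix_apply, Pi.basisFun_repr]
      rfl
    haveI : Invertible P := hPtm ▸ (Pi.basisFun (RatFunc ℝ) (Fin m)).invertibleToMatrix vb
    have hPdet : IsUnit P.det := Matrix.isUnit_det_of_invertible P
    set Q : Matrix (Fin m) (Fin m) (RatFunc ℝ) := P⁻¹ with hQdef
    have hPQ : P * Q = 1 := Matrix.mul_nonsing_inv _ hPdet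
    set d : Fin m → RatFunc ℝ := fun i => B (vb i) (vb i) with hddef
    have hD : Pᵀ * A * P = Matrix.diagonal d := by
      ext i j
      have key : (Pᵀ * A * P) i j = B (vb i) (vb j) := by
        rw [hBapp]
        simp only [Matrix.mul_apply, dotProduct, Matrix.mulVec, Matrix.transpose_apply,
          dotProduct, hPdef, Matrix.of_apply, Finset.sum_mul, Finset.mul_sum]
        rw [Finset.sum_comm]
        refine Finset.sum_congr rfl fun k _ => Finset.sum_congr rfl fun l _ => by ring
      rcases eq_or_ne i j with rfl | hij
      · rw [key, Matrix.diagonal_apply_eq]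
      · rw [key, Matrix.diagonal_apply_ne _ hij]
        exact hvbortho i j hij
    have hA2 : A = Qᵀ * Matrix.diagonal d * Q := by
      have h1 : Qᵀ * (Pᵀ * A * P) * Q = Qᵀ * Matrix.diagonal d * Q := by rw [hD]
      have h2 : Qᵀ * (Pᵀ * A * P) * Q = (P * Q)ᵀ * A * (P * Q) := by
        simp only [Matrix.transpose_mul, Matrix.mul_assoc]
      rw [← h1, h2, hPQ]
      simp
    -- clear denominators
    obtain ⟨ct, hct⟩ := IsLocalization.exist_integer_multiples_of_finite
      (nonZeroDivisors (Polynomial ℝ))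
      (Sum.elim (fun p : Fin m × Fin m => Q p.1 p.2) d)
    obtain ⟨cs, hcs⟩ := IsLocalization.exist_integer_multiples_of_finite
      (nonZeroDivisors (Polynomial ℝ))
      (fun p : Fin m × Fin m => P p.1 p.2)
    set t : Polynomial ℝ := (ct : Polynomial ℝ) with htdef
    set s : Polynomial ℝ := (cs : Polynomial ℝ) with hsdef
    have ht0 : t ≠ 0 := mem_nonZeroDivisors_iff_ne_zero.mp ct.2
    have hs0 : s ≠ 0 := mem_nonZeroDivisors_iff_ne_zero.mp cs.2
    have hXex : ∀ p : Fin m × Fin m, ∃ x : Polynomial ℝ, φ x = φ t * Q p.1 p.2 := by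
      intro p
      obtain ⟨x, hx⟩ := hct (Sum.inl p)
      exact ⟨x, by rw [hx, Sum.elim_inl, Algebra.smul_def]⟩
    choose X0 hX0 using hXex
    set X : Matrix (Fin m) (Fin m) (Polynomial ℝ) := Matrix.of (fun i j => X0 (i, j)) with hXdef
    have hX : ∀ i j, φ (X i j) = φ t * Q i j := fun i j => hX0 (i, j)
    have hYex : ∀ p : Fin m × Fin m, ∃ x : Polynomial ℝ, φ x = φ s * P p.1 p.2 := by
      intro p
      obtain ⟨x, hx⟩ := hcs p
      exact ⟨x, by rw [hx, Algebra.smul_def]⟩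
    choose Y0 hY0 using hYex
    set Y : Matrix (Fin m) (Fin m) (Polynomial ℝ) := Matrix.of (fun i j => Y0 (i, j)) with hYdef
    have hY : ∀ i j, φ (Y i j) = φ s * P i j := fun i j => hY0 (i, j)
    have hEex : ∀ i : Fin m, ∃ x : Polynomial ℝ, φ x = φ t * d i := by
      intro i
      obtain ⟨x, hx⟩ := hct (Sum.inr i)
      exact ⟨x, by rw [hx, Sum.elim_inr, Algebra.smul_def]⟩
    choose E hE using hEex
    set e : Fin m → Polynomial ℝ := fun i => t * E i with hedef
    have he : ∀ i, φ (e i) = φ t ^ 2 * d i := by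
      intro i
      show φ (t * E i) = _
      rw [_root_.map_mul, hE]
      ring
    -- mapped matrices
    have hXmap : X.map φ = φ t • Q := by ext i j; simpa using hX i j
    have hYmap : Y.map φ = φ s • P := by ext i j; simpa using hY i j
    -- the auxiliary polynomials g i and their nonnegativity
    set g : Fin m → Polynomial ℝ := fun i => (Yᵀ * F * Y) i i with hgdef
    have hYFY : (Yᵀ * F * Y).map φ = (φ s ^ 2) • Matrix.diagonal d := by
      have h1 : (Yᵀ * F * Y).map φ = (Y.map φ)ᵀ * A * Y.map φ := by
        rw [hAdef, Matrix.map_mul, Matrix.map_mul, Matrix.transpose_map]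
      rw [h1, hYmap, Matrix.transpose_smul, Matrix.smul_mul, Matrix.smul_mul,
        Matrix.mul_smul, hD, smul_smul, sq]
    have hg : ∀ i, φ (g i) = φ s ^ 2 * d i := by
      intro i
      have h0 : ((Yᵀ * F * Y).map φ) i i = ((φ s ^ 2) • Matrix.diagonal d) i i := by
        rw [hYFY]
      simpa [Matrix.map_apply, Matrix.diagonal_apply_eq] using h0
    have hgnn : ∀ i x, 0 ≤ (g i).eval x := by
      intro i x
      have hform : (g i).eval x =
          (fun k => (Y k i).eval x) ⬝ᵥ (F.map (fun p => p.eval x)).mulVec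
            (fun k => (Y k i).eval x) := by
        simp only [hgdef, Matrix.mul_apply, Matrix.transpose_apply, dotProduct,
          Matrix.mulVec, Matrix.map_apply, eval_finset_sum, eval_mul, Finset.sum_mul,
          Finset.mul_sum]
        rw [Finset.sum_comm]
        refine Finset.sum_congr rfl fun k _ => Finset.sum_congr rfl fun l _ => by ring
      rw [hform]
      exact hF x _
    -- relation between e and g and nonnegativity of e
    have hrel : ∀ i, s ^ 2 * e i = t ^ 2 * g i := by
      intro i
      apply hφ
      simp only [_root_.map_mul, map_pow, he, hg]
      ring
    have hennn : ∀ i x, 0 ≤ (e i).eval x := by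
      intro i
      apply nonneg_of_nonneg_off_zeros _ s hs0
      intro x hx
      have h1 : (s.eval x) ^ 2 * (e i).eval x = (t.eval x) ^ 2 * (g i).eval x := by
        have := congrArg (fun p => p.eval x) (hrel i)
        simpa [eval_mul, eval_pow] using this
      have h2 : 0 ≤ (t.eval x) ^ 2 * (g i).eval x :=
        mul_nonneg (sq_nonneg _) (hgnn i x)
      have hs2 : 0 < (s.eval x) ^ 2 := by positivity
      exact (mul_nonneg_iff_of_pos_left hs2).mp (h1 ▸ h2)
    -- sum of two squares decomposition of each e i
    have hsos : ∀ i, ∃ a b : Polynomial ℝ, e i = a ^ 2 + b ^ 2 := fun i =>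
      sos_of_nonneg_aux ((e i).natDegree) (e i) rfl (hennn i)
    choose pp qq hpq using hsos
    -- assemble
    refine ⟨t ^ 2, pow_ne_zero 2 ht0, Matrix.diagonal pp * X, Matrix.diagonal qq * X, ?_⟩
    apply Matrix.map_injective hφ (f := φ)
    beta_reduce
    have hlhs : ((t ^ 2) ^ 2 • F).map φ = (φ t ^ 4) • A := by
      ext i j
      simp only [Matrix.map_apply, Matrix.smul_apply, smul_eq_mul, _root_.map_mul, map_pow,
        hAdef]
      ring
    have hdiagsum : Matrix.diagonal (φ ∘ pp) * Matrix.diagonal (φ ∘ pp) +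
        Matrix.diagonal (φ ∘ qq) * Matrix.diagonal (φ ∘ qq) = φ t ^ 2 • Matrix.diagonal d := by
      rw [Matrix.diagonal_mul_diagonal, Matrix.diagonal_mul_diagonal, Matrix.diagonal_add]
      ext i j
      rcases eq_or_ne i j with rfl | hij
      · rw [Matrix.diagonal_apply_eq, Matrix.smul_apply, Matrix.diagonal_apply_eq]
        have : φ (e i) = φ (pp i) * φ (pp i) + φ (qq i) * φ (qq i) := by
          rw [hpq i]; push_cast [map_add, map_pow]; ring
        rw [Function.comp_apply, Function.comp_apply, ← this, he i, smul_eq_mul]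
      · rw [Matrix.diagonal_apply_ne _ hij, Matrix.smul_apply, Matrix.diagonal_apply_ne _ hij,
          smul_zero]
    have hdmap : ∀ (w : Fin m → Polynomial ℝ), (Matrix.diagonal w).map φ =
        Matrix.diagonal (φ ∘ w) := by
      intro w
      ext i j
      rcases eq_or_ne i j with rfl | hij
      · simp [Matrix.map_apply]
      · simp [Matrix.map_apply, Matrix.diagonal_apply_ne _ hij]
    rw [hlhs]
    rw [Matrix.map_add _ (map_add φ)]
    simp only [Matrix.map_mul]
    simp only [Matrix.transpose_map]
    simp only [Matrix.map_mul]
    simp only [hdmap, hXmap]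
    simp only [Matrix.transpose_mul, Matrix.diagonal_transpose, Matrix.transpose_smul]
    symm
    trans ((φ t * φ t) • (Qᵀ * ((Matrix.diagonal (⇑φ ∘ pp) * Matrix.diagonal (⇑φ ∘ pp) +
        Matrix.diagonal (⇑φ ∘ qq) * Matrix.diagonal (⇑φ ∘ qq)) * Q)))
    · simp only [Matrix.smul_mul, Matrix.mul_smul, Matrix.add_mul, Matrix.mul_add,
        Matrix.mul_assoc, smul_smul, smul_add]
    · rw [hdiagsum, hA2]
      simp only [Matrix.smul_mul, Matrix.mul_smul, smul_smul, Matrix.mul_assoc]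
      congr 1
      ring
  · -- easy direction
    rintro ⟨b, hb, U, V, hUV⟩ x u
    set u' : Fin m → Polynomial ℝ := fun i => C (u i) with hu'
    set q : Polynomial ℝ := u' ⬝ᵥ F.mulVec u' with hqdef
    have hqe : ∀ y : ℝ, q.eval y = u ⬝ᵥ (F.map (fun p => p.eval y)).mulVec u := fun y =>
      eval_quadform F u y
    have key : ∀ y : ℝ, 0 ≤ q.eval y := by
      apply nonneg_of_nonneg_off_zeros q b hb
      intro y hy
      have hid : b ^ 2 * q = u' ⬝ᵥ (Uᵀ * U + Vᵀ * V).mulVec u' := by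
        rw [← hUV, hqdef, Matrix.smul_mulVec, dotProduct_smul, smul_eq_mul]
      have hev := congrArg (fun p => Polynomial.eval y p) hid
      simp only [eval_mul, eval_pow] at hev
      rw [hqe y] at hev
      rw [eval_quadform (Uᵀ * U + Vᵀ * V) u y] at hev
      have hnn : 0 ≤ u ⬝ᵥ ((Uᵀ * U + Vᵀ * V).map (fun p => p.eval y)).mulVec u := by
        set f : Polynomial ℝ →+* ℝ := Polynomial.evalRingHom y with hf
        have hmap : (Uᵀ * U + Vᵀ * V).map (fun p => p.eval y) =
            (U.map f)ᵀ * U.map f + (V.map f)ᵀ * V.map f := by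
          rw [show (fun p : Polynomial ℝ => p.eval y) = (f : Polynomial ℝ → ℝ) from rfl,
            Matrix.map_add _ (map_add f), Matrix.map_mul, Matrix.map_mul, Matrix.transpose_map,
            Matrix.transpose_map]
        rw [hmap, Matrix.add_mulVec, dotProduct_add]
        have hsq : ∀ M : Matrix (Fin m) (Fin m) ℝ, 0 ≤ u ⬝ᵥ (Mᵀ * M).mulVec u := by
          intro M
          rw [← Matrix.mulVec_mulVec, Matrix.dotProduct_mulVec, Matrix.vecMul_transpose]
          exact dot_self_nonneg _
        exact add_nonneg (hsq _) (hsq _)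
      have hb2 : 0 < (b.eval y) ^ 2 := by positivity
      have hfin : 0 ≤ (b.eval y) ^ 2 * q.eval y := by
        rw [hqe y, hev]; exact hnn
      exact (mul_nonneg_iff_of_pos_left hb2).mp hfin
    rw [← hqe x]
    exact key x
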